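/- arXiv:1607.00451 — 2 statements merged into one kernel-verified Lean document; each statement's English description precedes it below -/
import Mathlib

section
/- For any symmetric matrices P(k), P(k+1) ∈ ℝ^{n×n} and any k ∈ {0,…,K}, the solution x of the mean-field stochastic difference equation satisfies the one-step identity: E[(x(k+1)−E x(k+1))ᵀ P(k+1) (x(k+1)−E x(k+1))] − E[(x(k)−E x(k))ᵀ P(k) (x(k)−E x(k))] = E{ (x(k)−E x(k))ᵀ [A(k)ᵀP(k+1)A(k)+C(k)ᵀP(k+1)C(k)−P(k)] (x(k)−E x(k)) + 2(x(k)−E x(k))ᵀ[A(k)ᵀP(k+1)B(k)+C(k)ᵀP(k+1)D(k)](ν(k)−E ν(k)) + (ν(k)−E ν(k))ᵀ[B(k)ᵀP(k+1)B(k)+D(k)ᵀP(k+1)D(k)](ν(k)−E ν(k)) } + (E x(k))ᵀ ℂ(k)ᵀP(k+1)ℂ(k) (E x(k)) + 2 (E x(k))ᵀ ℂ(k)ᵀP(k+1)𝔻(k) (E ν(k)) + (E ν(k))ᵀ 𝔻(k)ᵀP(k+1)𝔻(k) (E ν(k)). -/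
open MeasureTheory ProbabilityTheory Matrix Finset

/-- The mean-field stochastic state recursion
`x(k+1) = A x + Ã E x + B ν + B̃ E ν + (C x + C̃ E x + D ν + D̃ E ν)·ω(k)`. -/
noncomputable def mfState {Ω : Type*} [MeasurableSpace Ω] (μ : Measure Ω) {n l : ℕ}
    (A At C Ct : ℕ → Matrix (Fin n) (Fin n) ℝ)
    (B Bt D Dt : ℕ → Matrix (Fin n) (Fin l) ℝ)
    (W : ℕ → Ω → ℝ) (x0 : Fin n → ℝ) (ν : ℕ → Ω → Fin l → ℝ) :
    ℕ → Ω → Fin n → ℝ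
  | 0 => fun _ => x0
  | (k+1) => fun a =>
      A k *ᵥ mfState μ A At C Ct B Bt D Dt W x0 ν k a
      + At k *ᵥ (∫ b, mfState μ A At C Ct B Bt D Dt W x0 ν k b ∂μ)
      + B k *ᵥ ν k a + Bt k *ᵥ (∫ b, ν k b ∂μ)
      + W k a • (C k *ᵥ mfState μ A At C Ct B Bt D Dt W x0 ν k a
          + Ct k *ᵥ (∫ b, mfState μ A At C Ct B Bt D Dt W x0 ν k b ∂μ)
          + D k *ᵥ ν k a + Dt k *ᵥ (∫ b, ν k b ∂μ))

/-- Admissibility of a disturbance: square integrability and independence of the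
noise `ω(k)` from the pair `(x(k), ν(k))`. -/
def mfAdmissible {Ω : Type*} [MeasurableSpace Ω] (μ : Measure Ω) {n l : ℕ} (K : ℕ)
    (W : ℕ → Ω → ℝ) (x : ℕ → Ω → Fin n → ℝ) (ν : ℕ → Ω → Fin l → ℝ) : Prop :=
  (∀ k ≤ K, MemLp (ν k) 2 μ) ∧
  (∀ k ≤ K, IndepFun (fun a => (x k a, ν k a)) (W k) μ)

set_option linter.unusedSectionVars false
set_option maxHeartbeats 1000000

section helpers
variable {Ω : Type*} [MeasurableSpace Ω] {μ : Measure Ω} [IsProbabilityMeasure μ]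

lemma memL2_mul_int {f g : Ω → ℝ} (hf : MemLp f 2 μ) (hg : MemLp g 2 μ) :
    Integrable (fun a => f a * g a) μ := by
  have h := (hf.integrable_sq.add hg.integrable_sq).div_const 2
  refine h.mono' (hf.1.mul hg.1) ?_
  filter_upwards with a
  have : |f a * g a| ≤ (f a ^ 2 + g a ^ 2) / 2 := by
    nlinarith [sq_nonneg (|f a| - |g a|), abs_mul (f a) (g a), sq_abs (f a), sq_abs (g a),
      abs_nonneg (f a * g a), le_abs_self (f a * g a)]
  simpa [Real.norm_eq_abs, abs_mul] using this

lemma memL2_mulVec {m' q' : ℕ} (M : Matrix (Fin m') (Fin q') ℝ) {f : Ω → Fin q' → ℝ}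
    (hf : ∀ j, MemLp (fun a => f a j) 2 μ) (i : Fin m') :
    MemLp (fun a => (M *ᵥ f a) i) 2 μ := by
  simp only [mulVec, dotProduct]
  exact memLp_finset_sum _ (fun j _ => (hf j).const_mul (M i j))

lemma quad_integrable {m' q' : ℕ} (P : Matrix (Fin m') (Fin q') ℝ) {f : Ω → Fin m' → ℝ}
    {g : Ω → Fin q' → ℝ} (hf : ∀ i, MemLp (fun a => f a i) 2 μ)
    (hg : ∀ j, MemLp (fun a => g a j) 2 μ) :
    Integrable (fun a => f a ⬝ᵥ P *ᵥ g a) μ := by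
  have h : (fun a => f a ⬝ᵥ P *ᵥ g a) = fun a => ∑ i, ∑ j, f a i * (P i j * g a j) := by
    funext a; simp [dotProduct, mulVec, Finset.mul_sum]
  rw [h]
  exact integrable_finset_sum _ fun i _ => integrable_finset_sum _ fun j _ =>
    memL2_mul_int (hf i) ((hg j).const_mul (P i j))

lemma integral_dot_const {m' : ℕ} {f : Ω → Fin m' → ℝ}
    (hf : ∀ i, Integrable (fun a => f a i) μ) (c : Fin m' → ℝ) :
    ∫ a, f a ⬝ᵥ c ∂μ = (fun i => ∫ a, f a i ∂μ) ⬝ᵥ c := by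
  simp only [dotProduct]
  rw [integral_finset_sum _ fun i _ => (hf i).mul_const _]
  simp [integral_mul_const]

lemma dot3 {p q r s : ℕ} (M : Matrix (Fin p) (Fin q) ℝ) (P : Matrix (Fin p) (Fin r) ℝ)
    (N : Matrix (Fin r) (Fin s) ℝ) (a : Fin q → ℝ) (b : Fin s → ℝ) :
    (M *ᵥ a) ⬝ᵥ P *ᵥ (N *ᵥ b) = a ⬝ᵥ (Mᵀ * P * N) *ᵥ b := by
  rw [← mulVec_mulVec, ← mulVec_mulVec, dotProduct_mulVec a, vecMul_transpose]

lemma dot_symm {p q : ℕ} (M : Matrix (Fin p) (Fin q) ℝ) (a : Fin p → ℝ) (b : Fin q → ℝ) :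
    a ⬝ᵥ M *ᵥ b = b ⬝ᵥ Mᵀ *ᵥ a := by
  rw [dotProduct_mulVec b, vecMul_transpose, dotProduct_comm]

lemma pi_integral_apply {n' : ℕ} {f : Ω → Fin n' → ℝ} (hf : Integrable f μ) (i : Fin n') :
    (∫ a, f a ∂μ) i = ∫ a, f a i ∂μ :=
  ((ContinuousLinearMap.proj (R := ℝ) (φ := fun _ : Fin n' => ℝ) i).integral_comp_comm hf).symm

lemma memL2_comp_proj {p : ℕ} {f : Ω → Fin p → ℝ} (hf : MemLp f 2 μ) (i : Fin p) :
    MemLp (fun a => f a i) 2 μ := by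
  have := (ContinuousLinearMap.proj (R := ℝ) (φ := fun _ : Fin p => ℝ) i).comp_memLp' hf
  simpa [Function.comp_def] using this

lemma memL2_matrix_comp {p q : ℕ} (M : Matrix (Fin p) (Fin q) ℝ) {f : Ω → Fin q → ℝ}
    (hf : MemLp f 2 μ) : MemLp (fun a => M *ᵥ f a) 2 μ := by
  have := ((Matrix.mulVecLin M).toContinuousLinearMap).comp_memLp' hf
  simpa [Function.comp_def, Matrix.mulVecLin_apply] using this

lemma integrable_matrix_comp {p q : ℕ} (M : Matrix (Fin p) (Fin q) ℝ) {f : Ω → Fin q → ℝ}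
    (hf : Integrable f μ) : Integrable (fun a => M *ᵥ f a) μ := by
  have := ((Matrix.mulVecLin M).toContinuousLinearMap).integrable_comp hf
  simpa [Function.comp, Matrix.mulVecLin_apply] using this

lemma integral_matrix_comp {p q : ℕ} (M : Matrix (Fin p) (Fin q) ℝ) {f : Ω → Fin q → ℝ}
    (hf : Integrable f μ) : ∫ a, M *ᵥ f a ∂μ = M *ᵥ ∫ a, f a ∂μ := by
  have := ((Matrix.mulVecLin M).toContinuousLinearMap).integral_comp_comm hf
  simpa [Matrix.mulVecLin_apply] using this

lemma memL2_smul_of_indep {n' : ℕ} {w : Ω → ℝ} {v : Ω → Fin n' → ℝ}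
    (hw : MemLp w 2 μ) (hv : MemLp v 2 μ) (hind : IndepFun v w μ) :
    MemLp (fun a => w a • v a) 2 μ := by
  have hmeas : AEStronglyMeasurable (fun a => w a • v a) μ := hw.1.smul hv.1
  rw [memLp_two_iff_integrable_sq_norm hmeas]
  have hnorm : (fun a => ‖w a • v a‖ ^ 2) = fun a => (‖v a‖ ^ 2) * (‖w a‖ ^ 2) := by
    funext a; rw [norm_smul]; ring
  rw [hnorm]
  have hiv : Integrable (fun a => ‖v a‖ ^ 2) μ := (memLp_two_iff_integrable_sq_norm hv.1).1 hv
  have hiw : Integrable (fun a => ‖w a‖ ^ 2) μ := (memLp_two_iff_integrable_sq_norm hw.1).1 hw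
  have hi2 : IndepFun (fun a => ‖v a‖ ^ 2) (fun a => ‖w a‖ ^ 2) μ :=
    hind.comp (measurable_norm.pow_const 2) (measurable_norm.pow_const 2)
  exact hi2.integrable_mul hiv hiw

lemma integral_mulVec_comp_zero {p q : ℕ} (M : Matrix (Fin p) (Fin q) ℝ) {f : Ω → Fin q → ℝ}
    (hf : ∀ j, Integrable (fun a => f a j) μ) (hf0 : ∀ j, ∫ a, f a j ∂μ = 0) (i : Fin p) :
    ∫ a, (M *ᵥ f a) i ∂μ = 0 := by
  simp only [mulVec, dotProduct]
  rw [integral_finset_sum _ fun j _ => (hf j).const_mul _]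
  simp [integral_const_mul, hf0]

lemma quad_expand {n' l' p : ℕ} (P : Matrix (Fin p) (Fin p) ℝ) (hP : P.IsSymm)
    (M : Matrix (Fin p) (Fin n') ℝ) (N : Matrix (Fin p) (Fin l') ℝ)
    (y : Fin n' → ℝ) (w : Fin l' → ℝ) :
    (M *ᵥ y + N *ᵥ w) ⬝ᵥ P *ᵥ (M *ᵥ y + N *ᵥ w)
    = y ⬝ᵥ (Mᵀ * P * M) *ᵥ y + 2 * (y ⬝ᵥ (Mᵀ * P * N) *ᵥ w) + w ⬝ᵥ (Nᵀ * P * N) *ᵥ w := by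
  have hsym : (Nᵀ * P * M)ᵀ = Mᵀ * P * N := by
    rw [Matrix.transpose_mul, Matrix.transpose_mul, transpose_transpose, hP.eq, Matrix.mul_assoc]
  simp only [mulVec_add, dotProduct_add, add_dotProduct]
  rw [dot3, dot3, dot3, dot3, dot_symm (Nᵀ * P * M) w y, hsym]
  ring

lemma quad_shift {p : ℕ} (P : Matrix (Fin p) (Fin p) ℝ) (g m : Fin p → ℝ) :
    (g + m) ⬝ᵥ P *ᵥ (g + m) = g ⬝ᵥ P *ᵥ g + g ⬝ᵥ (P *ᵥ m + Pᵀ *ᵥ m) + m ⬝ᵥ P *ᵥ m := by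
  simp only [mulVec_add, dotProduct_add, add_dotProduct]
  rw [dot_symm P m g]
  ring

end helpers

section main0
variable {Ω : Type*} [MeasurableSpace Ω] {μ : Measure Ω} [IsProbabilityMeasure μ]

lemma one_step_abstract {n l : ℕ}
    (A At C Ct : Matrix (Fin n) (Fin n) ℝ) (B Bt D Dt : Matrix (Fin n) (Fin l) ℝ)
    (ω : Ω → ℝ) (X : Ω → Fin n → ℝ) (V : Ω → Fin l → ℝ) (Z : Ω → Fin n → ℝ)
    (hX2 : MemLp X 2 μ) (hV2 : MemLp V 2 μ) (hω2 : MemLp ω 2 μ)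
    (hind : IndepFun (fun a => (X a, V a)) ω μ)
    (hωm : ∫ a, ω a ∂μ = 0) (hωv : ∫ a, ω a * ω a ∂μ = 1)
    (xb : Fin n → ℝ) (vb : Fin l → ℝ) (hxb0 : xb = ∫ b, X b ∂μ) (hvb0 : vb = ∫ b, V b ∂μ)
    (hZ : ∀ a, Z a = A *ᵥ X a + At *ᵥ xb + B *ᵥ V a + Bt *ᵥ vb
        + ω a • (C *ᵥ X a + Ct *ᵥ xb + D *ᵥ V a + Dt *ᵥ vb))
    (Pk Pk1 : Matrix (Fin n) (Fin n) ℝ) (hPk1 : Pk1.IsSymm) :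
    (∫ a, (Z a - ∫ b, Z b ∂μ) ⬝ᵥ Pk1 *ᵥ (Z a - ∫ b, Z b ∂μ) ∂μ)
    - (∫ a, (X a - xb) ⬝ᵥ Pk *ᵥ (X a - xb) ∂μ)
    = (∫ a,
        ((X a - xb) ⬝ᵥ (Aᵀ * Pk1 * A + Cᵀ * Pk1 * C - Pk) *ᵥ (X a - xb)
        + 2 * ((X a - xb) ⬝ᵥ (Aᵀ * Pk1 * B + Cᵀ * Pk1 * D) *ᵥ (V a - vb))
        + (V a - vb) ⬝ᵥ (Bᵀ * Pk1 * B + Dᵀ * Pk1 * D) *ᵥ (V a - vb)) ∂μ)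
      + xb ⬝ᵥ ((C + Ct)ᵀ * Pk1 * (C + Ct)) *ᵥ xb
      + 2 * (xb ⬝ᵥ ((C + Ct)ᵀ * Pk1 * (D + Dt)) *ᵥ vb)
      + vb ⬝ᵥ ((D + Dt)ᵀ * Pk1 * (D + Dt)) *ᵥ vb := by
  have hX1 : Integrable X μ := hX2.integrable one_le_two
  have hV1 : Integrable V μ := hV2.integrable one_le_two
  have hω1 : Integrable ω μ := hω2.integrable one_le_two
  have hXc : ∀ i, MemLp (fun a => X a i) 2 μ := memL2_comp_proj hX2
  have hVc : ∀ j, MemLp (fun a => V a j) 2 μ := memL2_comp_proj hV2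
  have hxbar : ∀ i, xb i = ∫ a, X a i ∂μ := fun i => by rw [hxb0, pi_integral_apply hX1]
  have hnbar : ∀ j, vb j = ∫ a, V a j ∂μ := fun j => by rw [hvb0, pi_integral_apply hV1]
  have hyc : ∀ i, MemLp (fun a => (X a - xb) i) 2 μ := fun i => by
    simpa [Pi.sub_apply, Pi.sub_def] using (hXc i).sub (memLp_const (xb i))
  have hwc : ∀ j, MemLp (fun a => (V a - vb) j) 2 μ := fun j => by
    simpa [Pi.sub_apply, Pi.sub_def] using (hVc j).sub (memLp_const (vb j))
  have hyi : ∀ i, Integrable (fun a => (X a - xb) i) μ := fun i => (hyc i).integrable one_le_two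
  have hwi : ∀ j, Integrable (fun a => (V a - vb) j) μ := fun j => (hwc j).integrable one_le_two
  have hy0 : ∀ i, ∫ a, (X a - xb) i ∂μ = 0 := by
    intro i
    simp only [Pi.sub_apply]
    rw [integral_sub ((hXc i).integrable one_le_two) (integrable_const _)]
    simp [hxbar i]
  have hw0 : ∀ j, ∫ a, (V a - vb) j ∂μ = 0 := by
    intro j
    simp only [Pi.sub_apply]
    rw [integral_sub ((hVc j).integrable one_le_two) (integrable_const _)]
    simp [hnbar j]
  -- the noise-driven term: L², integrable, mean zero
  have hGv2 : MemLp (fun a => C *ᵥ X a + Ct *ᵥ xb + D *ᵥ V a + Dt *ᵥ vb) 2 μ :=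
    (((memL2_matrix_comp C hX2).add (memLp_const _)).add
      (memL2_matrix_comp D hV2)).add (memLp_const _)
  have hGcont : Continuous (fun p : (Fin n → ℝ) × (Fin l → ℝ) =>
      C *ᵥ p.1 + Ct *ᵥ xb + D *ᵥ p.2 + Dt *ᵥ vb) :=
    (((continuous_const.matrix_mulVec continuous_fst).add continuous_const).add
      (continuous_const.matrix_mulVec continuous_snd)).add continuous_const
  have hGind : IndepFun (fun a => C *ᵥ X a + Ct *ᵥ xb + D *ᵥ V a + Dt *ᵥ vb) ω μ :=
    hind.comp hGcont.measurable measurable_id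
  have hTw2 : MemLp (fun a => ω a • (C *ᵥ X a + Ct *ᵥ xb + D *ᵥ V a + Dt *ᵥ vb)) 2 μ :=
    memL2_smul_of_indep hω2 hGv2 hGind
  have hTw1 : Integrable (fun a => ω a • (C *ᵥ X a + Ct *ᵥ xb + D *ᵥ V a + Dt *ᵥ vb)) μ :=
    hTw2.integrable one_le_two
  have hTw0 : ∫ a, ω a • (C *ᵥ X a + Ct *ᵥ xb + D *ᵥ V a + Dt *ᵥ vb) ∂μ = 0 := by
    funext i
    rw [pi_integral_apply hTw1]
    have hindi : IndepFun ω (fun a => (C *ᵥ X a + Ct *ᵥ xb + D *ᵥ V a + Dt *ᵥ vb) i) μ :=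
      hind.symm.comp measurable_id ((continuous_apply i).comp hGcont).measurable
    have h := hindi.integral_mul_eq_mul_integral hω2.1 ((memL2_comp_proj hGv2 i).1)
    have hsm : ∀ a, (ω a • (C *ᵥ X a + Ct *ᵥ xb + D *ᵥ V a + Dt *ᵥ vb)) i
        = ω a * (C *ᵥ X a + Ct *ᵥ xb + D *ᵥ V a + Dt *ᵥ vb) i := fun a => rfl
    simp only [hsm]
    show (∫ a, ω a * (C *ᵥ X a + Ct *ᵥ xb + D *ᵥ V a + Dt *ᵥ vb) i ∂μ) = 0
    have h0 : integral μ (ω * fun a => (C *ᵥ X a + Ct *ᵥ xb + D *ᵥ V a + Dt *ᵥ vb) i) = 0 := by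
      rw [h, hωm, zero_mul]
    exact h0
  -- mean of Z
  have hmean : (∫ b, Z b ∂μ) = (A + At) *ᵥ xb + (B + Bt) *ᵥ vb := by
    have hZfun : Z = fun a => (A *ᵥ X a + At *ᵥ xb + B *ᵥ V a + Bt *ᵥ vb)
        + ω a • (C *ᵥ X a + Ct *ᵥ xb + D *ᵥ V a + Dt *ᵥ vb) := funext hZ
    simp only [hZfun]
    have i1 : Integrable (fun a => A *ᵥ X a) μ := integrable_matrix_comp A hX1
    have i3 : Integrable (fun a => B *ᵥ V a) μ := integrable_matrix_comp B hV1
    have i12 : Integrable (fun a => A *ᵥ X a + At *ᵥ xb) μ := i1.add (integrable_const _)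
    have i123 : Integrable (fun a => A *ᵥ X a + At *ᵥ xb + B *ᵥ V a) μ := i12.add i3
    have i1234 : Integrable (fun a => A *ᵥ X a + At *ᵥ xb + B *ᵥ V a + Bt *ᵥ vb) μ :=
      i123.add (integrable_const _)
    rw [integral_add i1234 hTw1, integral_add i123 (integrable_const _),
      integral_add i12 i3, integral_add i1 (integrable_const _), hTw0,
      integral_matrix_comp A hX1, integral_matrix_comp B hV1, ← hxb0, ← hvb0]
    simp only [integral_const, measure_univ, ENNReal.toReal_one, probReal_univ, one_smul, add_mulVec]
    abel
  -- centered Z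
  have hcent : ∀ a, Z a - ∫ b, Z b ∂μ
      = (A *ᵥ (X a - xb) + B *ᵥ (V a - vb))
        + ω a • (C *ᵥ (X a - xb) + D *ᵥ (V a - vb)
            + ((C + Ct) *ᵥ xb + (D + Dt) *ᵥ vb)) := by
    intro a
    rw [hZ a, hmean]
    simp only [mulVec_sub, add_mulVec]
    module
  -- component L² facts for the centered linear images
  have hu2 : ∀ i, MemLp (fun a => (A *ᵥ (X a - xb) + B *ᵥ (V a - vb)) i) 2 μ := fun i => by
    simpa [Pi.add_apply, Pi.add_def] using (memL2_mulVec A hyc i).add (memL2_mulVec B hwc i)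
  have hg2 : ∀ i, MemLp (fun a => (C *ᵥ (X a - xb) + D *ᵥ (V a - vb)) i) 2 μ := fun i => by
    simpa [Pi.add_apply, Pi.add_def] using (memL2_mulVec C hyc i).add (memL2_mulVec D hwc i)
  have hv2 : ∀ i, MemLp (fun a => (C *ᵥ (X a - xb) + D *ᵥ (V a - vb) + ((C + Ct) *ᵥ xb + (D + Dt) *ᵥ vb)) i) 2 μ := fun i => by
    simpa [Pi.add_apply, Pi.add_def] using (hg2 i).add (memLp_const (((C + Ct) *ᵥ xb + (D + Dt) *ᵥ vb) i))
  -- integrability of quadratic pieces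
  have hQ1i : Integrable (fun a => (A *ᵥ (X a - xb) + B *ᵥ (V a - vb)) ⬝ᵥ Pk1 *ᵥ (A *ᵥ (X a - xb) + B *ᵥ (V a - vb))) μ := quad_integrable Pk1 hu2 hu2
  have hQ3i : Integrable (fun a => (C *ᵥ (X a - xb) + D *ᵥ (V a - vb) + ((C + Ct) *ᵥ xb + (D + Dt) *ᵥ vb)) ⬝ᵥ Pk1 *ᵥ (C *ᵥ (X a - xb) + D *ᵥ (V a - vb) + ((C + Ct) *ᵥ xb + (D + Dt) *ᵥ vb))) μ := quad_integrable Pk1 hv2 hv2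
  have hQ2i : Integrable (fun a => (A *ᵥ (X a - xb) + B *ᵥ (V a - vb)) ⬝ᵥ Pk1 *ᵥ (C *ᵥ (X a - xb) + D *ᵥ (V a - vb) + ((C + Ct) *ᵥ xb + (D + Dt) *ᵥ vb)) + (C *ᵥ (X a - xb) + D *ᵥ (V a - vb) + ((C + Ct) *ᵥ xb + (D + Dt) *ᵥ vb)) ⬝ᵥ Pk1 *ᵥ (A *ᵥ (X a - xb) + B *ᵥ (V a - vb))) μ :=
    (quad_integrable Pk1 hu2 hv2).add (quad_integrable Pk1 hv2 hu2)
  -- independence of the noise from the quadratic pieces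
  have hUcont : Continuous (fun p : (Fin n → ℝ) × (Fin l → ℝ) =>
      A *ᵥ (p.1 - xb) + B *ᵥ (p.2 - vb)) :=
    (continuous_const.matrix_mulVec (continuous_fst.sub continuous_const)).add
      (continuous_const.matrix_mulVec (continuous_snd.sub continuous_const))
  have hVcont : Continuous (fun p : (Fin n → ℝ) × (Fin l → ℝ) =>
      C *ᵥ (p.1 - xb) + D *ᵥ (p.2 - vb) + ((C + Ct) *ᵥ xb + (D + Dt) *ᵥ vb)) :=
    ((continuous_const.matrix_mulVec (continuous_fst.sub continuous_const)).add
      (continuous_const.matrix_mulVec (continuous_snd.sub continuous_const))).add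
      continuous_const
  have hindQ2 : IndepFun ω (fun a => (A *ᵥ (X a - xb) + B *ᵥ (V a - vb)) ⬝ᵥ Pk1 *ᵥ (C *ᵥ (X a - xb) + D *ᵥ (V a - vb) + ((C + Ct) *ᵥ xb + (D + Dt) *ᵥ vb)) + (C *ᵥ (X a - xb) + D *ᵥ (V a - vb) + ((C + Ct) *ᵥ xb + (D + Dt) *ᵥ vb)) ⬝ᵥ Pk1 *ᵥ (A *ᵥ (X a - xb) + B *ᵥ (V a - vb))) μ :=
    hind.symm.comp measurable_id
      ((hUcont.dotProduct (continuous_const.matrix_mulVec hVcont)).add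
        (hVcont.dotProduct (continuous_const.matrix_mulVec hUcont))).measurable
  have hindQ3 : IndepFun (fun a => ω a * ω a) (fun a => (C *ᵥ (X a - xb) + D *ᵥ (V a - vb) + ((C + Ct) *ᵥ xb + (D + Dt) *ᵥ vb)) ⬝ᵥ Pk1 *ᵥ (C *ᵥ (X a - xb) + D *ᵥ (V a - vb) + ((C + Ct) *ᵥ xb + (D + Dt) *ᵥ vb))) μ :=
    hind.symm.comp (measurable_id.mul measurable_id)
      (hVcont.dotProduct (continuous_const.matrix_mulVec hVcont)).measurable
  have hωQ2int : Integrable (fun a => ω a * ((A *ᵥ (X a - xb) + B *ᵥ (V a - vb)) ⬝ᵥ Pk1 *ᵥ (C *ᵥ (X a - xb) + D *ᵥ (V a - vb) + ((C + Ct) *ᵥ xb + (D + Dt) *ᵥ vb)) + (C *ᵥ (X a - xb) + D *ᵥ (V a - vb) + ((C + Ct) *ᵥ xb + (D + Dt) *ᵥ vb)) ⬝ᵥ Pk1 *ᵥ (A *ᵥ (X a - xb) + B *ᵥ (V a - vb)))) μ := hindQ2.integrable_mul hω1 hQ2i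
  have hsq : Integrable (fun a => ω a * ω a) μ := by simpa [pow_two] using hω2.integrable_sq
  have hωωQ3int : Integrable (fun a => (ω a * ω a) * ((C *ᵥ (X a - xb) + D *ᵥ (V a - vb) + ((C + Ct) *ᵥ xb + (D + Dt) *ᵥ vb)) ⬝ᵥ Pk1 *ᵥ (C *ᵥ (X a - xb) + D *ᵥ (V a - vb) + ((C + Ct) *ᵥ xb + (D + Dt) *ᵥ vb)))) μ :=
    hindQ3.integrable_mul hsq hQ3i
  -- pointwise expansion of the centered quadratic form at time k+1
  have epre : ∀ a, (Z a - ∫ b, Z b ∂μ) ⬝ᵥ Pk1 *ᵥ (Z a - ∫ b, Z b ∂μ)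
      = (A *ᵥ (X a - xb) + B *ᵥ (V a - vb)) ⬝ᵥ Pk1 *ᵥ (A *ᵥ (X a - xb) + B *ᵥ (V a - vb)) + ω a * ((A *ᵥ (X a - xb) + B *ᵥ (V a - vb)) ⬝ᵥ Pk1 *ᵥ (C *ᵥ (X a - xb) + D *ᵥ (V a - vb) + ((C + Ct) *ᵥ xb + (D + Dt) *ᵥ vb)) + (C *ᵥ (X a - xb) + D *ᵥ (V a - vb) + ((C + Ct) *ᵥ xb + (D + Dt) *ᵥ vb)) ⬝ᵥ Pk1 *ᵥ (A *ᵥ (X a - xb) + B *ᵥ (V a - vb))) + (ω a * ω a) * ((C *ᵥ (X a - xb) + D *ᵥ (V a - vb) + ((C + Ct) *ᵥ xb + (D + Dt) *ᵥ vb)) ⬝ᵥ Pk1 *ᵥ (C *ᵥ (X a - xb) + D *ᵥ (V a - vb) + ((C + Ct) *ᵥ xb + (D + Dt) *ᵥ vb))) := by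
    intro a
    rw [hcent a]
    simp only [dotProduct_add, add_dotProduct, mulVec_add, mulVec_smul, dotProduct_smul,
      smul_dotProduct, smul_eq_mul]
    ring
  have e2 : ∫ a, ω a * ((A *ᵥ (X a - xb) + B *ᵥ (V a - vb)) ⬝ᵥ Pk1 *ᵥ (C *ᵥ (X a - xb) + D *ᵥ (V a - vb) + ((C + Ct) *ᵥ xb + (D + Dt) *ᵥ vb)) + (C *ᵥ (X a - xb) + D *ᵥ (V a - vb) + ((C + Ct) *ᵥ xb + (D + Dt) *ᵥ vb)) ⬝ᵥ Pk1 *ᵥ (A *ᵥ (X a - xb) + B *ᵥ (V a - vb))) ∂μ = 0 := by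
    have h := hindQ2.integral_mul_eq_mul_integral hω2.1 hQ2i.1
    have h0 : integral μ (ω * fun a => (A *ᵥ (X a - xb) + B *ᵥ (V a - vb)) ⬝ᵥ Pk1 *ᵥ (C *ᵥ (X a - xb) + D *ᵥ (V a - vb) + ((C + Ct) *ᵥ xb + (D + Dt) *ᵥ vb)) + (C *ᵥ (X a - xb) + D *ᵥ (V a - vb) + ((C + Ct) *ᵥ xb + (D + Dt) *ᵥ vb)) ⬝ᵥ Pk1 *ᵥ (A *ᵥ (X a - xb) + B *ᵥ (V a - vb))) = 0 := by rw [h, hωm, zero_mul]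
    exact h0
  have e3 : ∫ a, (ω a * ω a) * ((C *ᵥ (X a - xb) + D *ᵥ (V a - vb) + ((C + Ct) *ᵥ xb + (D + Dt) *ᵥ vb)) ⬝ᵥ Pk1 *ᵥ (C *ᵥ (X a - xb) + D *ᵥ (V a - vb) + ((C + Ct) *ᵥ xb + (D + Dt) *ᵥ vb))) ∂μ = ∫ a, (C *ᵥ (X a - xb) + D *ᵥ (V a - vb) + ((C + Ct) *ᵥ xb + (D + Dt) *ᵥ vb)) ⬝ᵥ Pk1 *ᵥ (C *ᵥ (X a - xb) + D *ᵥ (V a - vb) + ((C + Ct) *ᵥ xb + (D + Dt) *ᵥ vb)) ∂μ := by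
    have h := hindQ3.integral_mul_eq_mul_integral hsq.1 hQ3i.1
    have h0 : integral μ ((fun a => ω a * ω a) * fun a => (C *ᵥ (X a - xb) + D *ᵥ (V a - vb) + ((C + Ct) *ᵥ xb + (D + Dt) *ᵥ vb)) ⬝ᵥ Pk1 *ᵥ (C *ᵥ (X a - xb) + D *ᵥ (V a - vb) + ((C + Ct) *ᵥ xb + (D + Dt) *ᵥ vb))) = ∫ a, (C *ᵥ (X a - xb) + D *ᵥ (V a - vb) + ((C + Ct) *ᵥ xb + (D + Dt) *ᵥ vb)) ⬝ᵥ Pk1 *ᵥ (C *ᵥ (X a - xb) + D *ᵥ (V a - vb) + ((C + Ct) *ᵥ xb + (D + Dt) *ᵥ vb)) ∂μ := by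
      rw [h, hωv, one_mul]
    exact h0
  have hQ12 : Integrable (fun a => (A *ᵥ (X a - xb) + B *ᵥ (V a - vb)) ⬝ᵥ Pk1 *ᵥ (A *ᵥ (X a - xb) + B *ᵥ (V a - vb)) + ω a * ((A *ᵥ (X a - xb) + B *ᵥ (V a - vb)) ⬝ᵥ Pk1 *ᵥ (C *ᵥ (X a - xb) + D *ᵥ (V a - vb) + ((C + Ct) *ᵥ xb + (D + Dt) *ᵥ vb)) + (C *ᵥ (X a - xb) + D *ᵥ (V a - vb) + ((C + Ct) *ᵥ xb + (D + Dt) *ᵥ vb)) ⬝ᵥ Pk1 *ᵥ (A *ᵥ (X a - xb) + B *ᵥ (V a - vb)))) μ := hQ1i.add hωQ2int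
  have hsplit : ∫ a, (Z a - ∫ b, Z b ∂μ) ⬝ᵥ Pk1 *ᵥ (Z a - ∫ b, Z b ∂μ) ∂μ
      = (∫ a, (A *ᵥ (X a - xb) + B *ᵥ (V a - vb)) ⬝ᵥ Pk1 *ᵥ (A *ᵥ (X a - xb) + B *ᵥ (V a - vb)) ∂μ) + (∫ a, (C *ᵥ (X a - xb) + D *ᵥ (V a - vb) + ((C + Ct) *ᵥ xb + (D + Dt) *ᵥ vb)) ⬝ᵥ Pk1 *ᵥ (C *ᵥ (X a - xb) + D *ᵥ (V a - vb) + ((C + Ct) *ᵥ xb + (D + Dt) *ᵥ vb)) ∂μ) := by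
    simp only [epre]
    rw [integral_add hQ12 hωωQ3int, integral_add hQ1i hωQ2int, e2, e3]
    ring
  -- zero-mean of the cross term
  have hgi : ∀ i, Integrable (fun a => (C *ᵥ (X a - xb) + D *ᵥ (V a - vb)) i) μ := fun i => (hg2 i).integrable one_le_two
  have ecross : ∫ a, (C *ᵥ (X a - xb) + D *ᵥ (V a - vb)) ⬝ᵥ (Pk1 *ᵥ ((C + Ct) *ᵥ xb + (D + Dt) *ᵥ vb) + Pk1ᵀ *ᵥ ((C + Ct) *ᵥ xb + (D + Dt) *ᵥ vb)) ∂μ = 0 := by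
    rw [integral_dot_const hgi]
    have hz : (fun i => ∫ a, (C *ᵥ (X a - xb) + D *ᵥ (V a - vb)) i ∂μ) = (fun _ => (0 : ℝ)) := by
      funext i
      simp only [Pi.add_apply]
      rw [integral_add ((memL2_mulVec C hyc i).integrable one_le_two)
        ((memL2_mulVec D hwc i).integrable one_le_two),
        integral_mulVec_comp_zero C hyi hy0 i, integral_mulVec_comp_zero D hwi hw0 i, add_zero]
    rw [hz]
    simp [dotProduct]
  -- pointwise expansions of the quadratic forms
  have eq1 : ∀ a, (A *ᵥ (X a - xb) + B *ᵥ (V a - vb)) ⬝ᵥ Pk1 *ᵥ (A *ᵥ (X a - xb) + B *ᵥ (V a - vb))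
      = (X a - xb) ⬝ᵥ (Aᵀ * Pk1 * A) *ᵥ (X a - xb)
      + 2 * ((X a - xb) ⬝ᵥ (Aᵀ * Pk1 * B) *ᵥ (V a - vb))
      + (V a - vb) ⬝ᵥ (Bᵀ * Pk1 * B) *ᵥ (V a - vb) :=
    fun a => quad_expand Pk1 hPk1 A B _ _
  have eq3 : ∀ a, (C *ᵥ (X a - xb) + D *ᵥ (V a - vb) + ((C + Ct) *ᵥ xb + (D + Dt) *ᵥ vb)) ⬝ᵥ Pk1 *ᵥ (C *ᵥ (X a - xb) + D *ᵥ (V a - vb) + ((C + Ct) *ᵥ xb + (D + Dt) *ᵥ vb))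
      = ((X a - xb) ⬝ᵥ (Cᵀ * Pk1 * C) *ᵥ (X a - xb)
      + 2 * ((X a - xb) ⬝ᵥ (Cᵀ * Pk1 * D) *ᵥ (V a - vb))
      + (V a - vb) ⬝ᵥ (Dᵀ * Pk1 * D) *ᵥ (V a - vb))
        + ((C *ᵥ (X a - xb) + D *ᵥ (V a - vb)) ⬝ᵥ (Pk1 *ᵥ ((C + Ct) *ᵥ xb + (D + Dt) *ᵥ vb) + Pk1ᵀ *ᵥ ((C + Ct) *ᵥ xb + (D + Dt) *ᵥ vb)))
        + ((C + Ct) *ᵥ xb + (D + Dt) *ᵥ vb) ⬝ᵥ Pk1 *ᵥ ((C + Ct) *ᵥ xb + (D + Dt) *ᵥ vb) := by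
    intro a
    rw [quad_shift, quad_expand Pk1 hPk1 C D]
  -- integrability of expanded pieces
  have hq1pi : Integrable (fun a => (X a - xb) ⬝ᵥ (Aᵀ * Pk1 * A) *ᵥ (X a - xb)
      + 2 * ((X a - xb) ⬝ᵥ (Aᵀ * Pk1 * B) *ᵥ (V a - vb))
      + (V a - vb) ⬝ᵥ (Bᵀ * Pk1 * B) *ᵥ (V a - vb)) μ :=
    ((quad_integrable _ hyc hyc).add ((quad_integrable _ hyc hwc).const_mul 2)).add
      (quad_integrable _ hwc hwc)
  have hq3pi : Integrable (fun a => (X a - xb) ⬝ᵥ (Cᵀ * Pk1 * C) *ᵥ (X a - xb)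
      + 2 * ((X a - xb) ⬝ᵥ (Cᵀ * Pk1 * D) *ᵥ (V a - vb))
      + (V a - vb) ⬝ᵥ (Dᵀ * Pk1 * D) *ᵥ (V a - vb)) μ :=
    ((quad_integrable _ hyc hyc).add ((quad_integrable _ hyc hwc).const_mul 2)).add
      (quad_integrable _ hwc hwc)
  have hcrossi : Integrable (fun a => (C *ᵥ (X a - xb) + D *ᵥ (V a - vb)) ⬝ᵥ (Pk1 *ᵥ ((C + Ct) *ᵥ xb + (D + Dt) *ᵥ vb) + Pk1ᵀ *ᵥ ((C + Ct) *ᵥ xb + (D + Dt) *ᵥ vb))) μ := by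
    simp only [dotProduct]
    exact integrable_finset_sum _ fun i _ => (hgi i).mul_const _
  have hq3cross : Integrable (fun a => ((X a - xb) ⬝ᵥ (Cᵀ * Pk1 * C) *ᵥ (X a - xb)
      + 2 * ((X a - xb) ⬝ᵥ (Cᵀ * Pk1 * D) *ᵥ (V a - vb))
      + (V a - vb) ⬝ᵥ (Dᵀ * Pk1 * D) *ᵥ (V a - vb)) + ((C *ᵥ (X a - xb) + D *ᵥ (V a - vb)) ⬝ᵥ (Pk1 *ᵥ ((C + Ct) *ᵥ xb + (D + Dt) *ᵥ vb) + Pk1ᵀ *ᵥ ((C + Ct) *ᵥ xb + (D + Dt) *ᵥ vb)))) μ := hq3pi.add hcrossi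
  have eQ3 : ∫ a, (C *ᵥ (X a - xb) + D *ᵥ (V a - vb) + ((C + Ct) *ᵥ xb + (D + Dt) *ᵥ vb)) ⬝ᵥ Pk1 *ᵥ (C *ᵥ (X a - xb) + D *ᵥ (V a - vb) + ((C + Ct) *ᵥ xb + (D + Dt) *ᵥ vb)) ∂μ
      = (∫ a, (X a - xb) ⬝ᵥ (Cᵀ * Pk1 * C) *ᵥ (X a - xb)
      + 2 * ((X a - xb) ⬝ᵥ (Cᵀ * Pk1 * D) *ᵥ (V a - vb))
      + (V a - vb) ⬝ᵥ (Dᵀ * Pk1 * D) *ᵥ (V a - vb) ∂μ) + ((C + Ct) *ᵥ xb + (D + Dt) *ᵥ vb) ⬝ᵥ Pk1 *ᵥ ((C + Ct) *ᵥ xb + (D + Dt) *ᵥ vb) := by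
    simp only [eq3]
    rw [integral_add hq3cross (integrable_const _), integral_add hq3pi hcrossi, ecross,
      integral_const]
    simp [measure_univ]
  -- the big integrand on the right-hand side
  have hbig : (∫ a,
        ((X a - xb) ⬝ᵥ (Aᵀ * Pk1 * A + Cᵀ * Pk1 * C - Pk) *ᵥ (X a - xb)
        + 2 * ((X a - xb) ⬝ᵥ (Aᵀ * Pk1 * B + Cᵀ * Pk1 * D) *ᵥ (V a - vb))
        + (V a - vb) ⬝ᵥ (Bᵀ * Pk1 * B + Dᵀ * Pk1 * D) *ᵥ (V a - vb)) ∂μ)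
      = (∫ a, (X a - xb) ⬝ᵥ (Aᵀ * Pk1 * A) *ᵥ (X a - xb)
      + 2 * ((X a - xb) ⬝ᵥ (Aᵀ * Pk1 * B) *ᵥ (V a - vb))
      + (V a - vb) ⬝ᵥ (Bᵀ * Pk1 * B) *ᵥ (V a - vb) ∂μ) + (∫ a, (X a - xb) ⬝ᵥ (Cᵀ * Pk1 * C) *ᵥ (X a - xb)
      + 2 * ((X a - xb) ⬝ᵥ (Cᵀ * Pk1 * D) *ᵥ (V a - vb))
      + (V a - vb) ⬝ᵥ (Dᵀ * Pk1 * D) *ᵥ (V a - vb) ∂μ)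
        - ∫ a, (X a - xb) ⬝ᵥ Pk *ᵥ (X a - xb) ∂μ := by
    have hpt : ∀ a,
        (X a - xb) ⬝ᵥ (Aᵀ * Pk1 * A + Cᵀ * Pk1 * C - Pk) *ᵥ (X a - xb)
        + 2 * ((X a - xb) ⬝ᵥ (Aᵀ * Pk1 * B + Cᵀ * Pk1 * D) *ᵥ (V a - vb))
        + (V a - vb) ⬝ᵥ (Bᵀ * Pk1 * B + Dᵀ * Pk1 * D) *ᵥ (V a - vb)
        = (((X a - xb) ⬝ᵥ (Aᵀ * Pk1 * A) *ᵥ (X a - xb)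
      + 2 * ((X a - xb) ⬝ᵥ (Aᵀ * Pk1 * B) *ᵥ (V a - vb))
      + (V a - vb) ⬝ᵥ (Bᵀ * Pk1 * B) *ᵥ (V a - vb)) + ((X a - xb) ⬝ᵥ (Cᵀ * Pk1 * C) *ᵥ (X a - xb)
      + 2 * ((X a - xb) ⬝ᵥ (Cᵀ * Pk1 * D) *ᵥ (V a - vb))
      + (V a - vb) ⬝ᵥ (Dᵀ * Pk1 * D) *ᵥ (V a - vb)))
          - (X a - xb) ⬝ᵥ Pk *ᵥ (X a - xb) := by
      intro a
      simp only [add_mulVec, sub_mulVec, dotProduct_add, dotProduct_sub]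
      ring
    simp only [hpt]
    have hq13 : Integrable (fun a => (((X a - xb) ⬝ᵥ (Aᵀ * Pk1 * A) *ᵥ (X a - xb)
      + 2 * ((X a - xb) ⬝ᵥ (Aᵀ * Pk1 * B) *ᵥ (V a - vb))
      + (V a - vb) ⬝ᵥ (Bᵀ * Pk1 * B) *ᵥ (V a - vb))) + ((X a - xb) ⬝ᵥ (Cᵀ * Pk1 * C) *ᵥ (X a - xb)
      + 2 * ((X a - xb) ⬝ᵥ (Cᵀ * Pk1 * D) *ᵥ (V a - vb))
      + (V a - vb) ⬝ᵥ (Dᵀ * Pk1 * D) *ᵥ (V a - vb))) μ := hq1pi.add hq3pi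
    rw [integral_sub hq13 (quad_integrable Pk hyc hyc), integral_add hq1pi hq3pi]
  -- assemble
  have hmpm : ((C + Ct) *ᵥ xb + (D + Dt) *ᵥ vb) ⬝ᵥ Pk1 *ᵥ ((C + Ct) *ᵥ xb + (D + Dt) *ᵥ vb)
      = xb ⬝ᵥ ((C + Ct)ᵀ * Pk1 * (C + Ct)) *ᵥ xb
        + 2 * (xb ⬝ᵥ ((C + Ct)ᵀ * Pk1 * (D + Dt)) *ᵥ vb)
        + vb ⬝ᵥ ((D + Dt)ᵀ * Pk1 * (D + Dt)) *ᵥ vb :=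
    quad_expand Pk1 hPk1 (C + Ct) (D + Dt) xb vb
  rw [hsplit]
  simp only [eq1]
  rw [eQ3, hbig, hmpm]
  ring

end main0


section mfaux
variable {Ω : Type*} [MeasurableSpace Ω] {μ : Measure Ω} [IsProbabilityMeasure μ]

lemma mfState_memL2 {n l : ℕ} (K : ℕ) (A At C Ct : ℕ → Matrix (Fin n) (Fin n) ℝ)
    (B Bt D Dt : ℕ → Matrix (Fin n) (Fin l) ℝ) (W : ℕ → Ω → ℝ)
    (hW2 : ∀ k ≤ K, MemLp (W k) 2 μ) (x0 : Fin n → ℝ) (ν : ℕ → Ω → Fin l → ℝ)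
    (hν2 : ∀ k ≤ K, MemLp (ν k) 2 μ)
    (hindep : ∀ k ≤ K, IndepFun
      (fun a => (mfState μ A At C Ct B Bt D Dt W x0 ν k a, ν k a)) (W k) μ) :
    ∀ j ≤ K, MemLp (mfState μ A At C Ct B Bt D Dt W x0 ν j) 2 μ := by
  intro j
  induction j with
  | zero => exact fun _ => memLp_const x0
  | succ j ih =>
    intro hj
    have hjK : j ≤ K := Nat.le_of_succ_le hj
    have hxj := ih hjK
    have hνj := hν2 j hjK
    have hGv2 : MemLp (fun a => C j *ᵥ mfState μ A At C Ct B Bt D Dt W x0 ν j a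
        + Ct j *ᵥ (∫ b, mfState μ A At C Ct B Bt D Dt W x0 ν j b ∂μ)
        + D j *ᵥ ν j a + Dt j *ᵥ (∫ b, ν j b ∂μ)) 2 μ :=
      (((memL2_matrix_comp _ hxj).add (memLp_const _)).add
        (memL2_matrix_comp _ hνj)).add (memLp_const _)
    have hGcont : Continuous (fun p : (Fin n → ℝ) × (Fin l → ℝ) =>
        C j *ᵥ p.1 + Ct j *ᵥ (∫ b, mfState μ A At C Ct B Bt D Dt W x0 ν j b ∂μ)
        + D j *ᵥ p.2 + Dt j *ᵥ (∫ b, ν j b ∂μ)) :=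
      (((continuous_const.matrix_mulVec continuous_fst).add continuous_const).add
        (continuous_const.matrix_mulVec continuous_snd)).add continuous_const
    have hGind : IndepFun (fun a => C j *ᵥ mfState μ A At C Ct B Bt D Dt W x0 ν j a
        + Ct j *ᵥ (∫ b, mfState μ A At C Ct B Bt D Dt W x0 ν j b ∂μ)
        + D j *ᵥ ν j a + Dt j *ᵥ (∫ b, ν j b ∂μ)) (W j) μ :=
      (hindep j hjK).comp hGcont.measurable measurable_id
    have h5 : MemLp (fun a => W j a • (C j *ᵥ mfState μ A At C Ct B Bt D Dt W x0 ν j a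
        + Ct j *ᵥ (∫ b, mfState μ A At C Ct B Bt D Dt W x0 ν j b ∂μ)
        + D j *ᵥ ν j a + Dt j *ᵥ (∫ b, ν j b ∂μ))) 2 μ :=
      memL2_smul_of_indep (hW2 j hjK) hGv2 hGind
    exact ((((memL2_matrix_comp _ hxj).add (memLp_const _)).add
      (memL2_matrix_comp _ hνj)).add (memLp_const _)).add h5

end mfaux

/-- equation (2.4) of the paper.  One-step identity for the centered
second moment of the mean-field state. -/
theorem mf_one_step_identity {Ω : Type*} [MeasurableSpace Ω]
    (μ : Measure Ω) [IsProbabilityMeasure μ]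
    (K n l : ℕ)
    (A At C Ct : ℕ → Matrix (Fin n) (Fin n) ℝ)
    (B Bt D Dt : ℕ → Matrix (Fin n) (Fin l) ℝ)
    (W : ℕ → Ω → ℝ)
    (hW2 : ∀ k ≤ K, MemLp (W k) 2 μ)
    (hWmean : ∀ k ≤ K, ∫ a, W k a ∂μ = 0)
    (hWcov : ∀ s ≤ K, ∀ t ≤ K, ∫ a, W s a * W t a ∂μ = if s = t then (1:ℝ) else 0)
    (x0 : Fin n → ℝ) (ν : ℕ → Ω → Fin l → ℝ)
    (x : ℕ → Ω → Fin n → ℝ)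
    (hx : x = mfState μ A At C Ct B Bt D Dt W x0 ν)
    (hadm : mfAdmissible μ K W x ν)
    (k : ℕ) (hk : k ≤ K)
    (Pk Pk1 : Matrix (Fin n) (Fin n) ℝ) (hPk : Pk.IsSymm) (hPk1 : Pk1.IsSymm) :
    (∫ a, (x (k+1) a - ∫ b, x (k+1) b ∂μ) ⬝ᵥ Pk1 *ᵥ (x (k+1) a - ∫ b, x (k+1) b ∂μ) ∂μ)
    - (∫ a, (x k a - ∫ b, x k b ∂μ) ⬝ᵥ Pk *ᵥ (x k a - ∫ b, x k b ∂μ) ∂μ)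
    = (∫ a,
        ((x k a - ∫ b, x k b ∂μ) ⬝ᵥ
            ((A k)ᵀ * Pk1 * A k + (C k)ᵀ * Pk1 * C k - Pk) *ᵥ (x k a - ∫ b, x k b ∂μ)
        + 2 * ((x k a - ∫ b, x k b ∂μ) ⬝ᵥ
            ((A k)ᵀ * Pk1 * B k + (C k)ᵀ * Pk1 * D k) *ᵥ (ν k a - ∫ b, ν k b ∂μ))
        + (ν k a - ∫ b, ν k b ∂μ) ⬝ᵥ
            ((B k)ᵀ * Pk1 * B k + (D k)ᵀ * Pk1 * D k) *ᵥ (ν k a - ∫ b, ν k b ∂μ)) ∂μ)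
      + (∫ b, x k b ∂μ) ⬝ᵥ ((C k + Ct k)ᵀ * Pk1 * (C k + Ct k)) *ᵥ (∫ b, x k b ∂μ)
      + 2 * ((∫ b, x k b ∂μ) ⬝ᵥ ((C k + Ct k)ᵀ * Pk1 * (D k + Dt k)) *ᵥ (∫ b, ν k b ∂μ))
      + (∫ b, ν k b ∂μ) ⬝ᵥ ((D k + Dt k)ᵀ * Pk1 * (D k + Dt k)) *ᵥ (∫ b, ν k b ∂μ) := by
  obtain ⟨hν2, hindep⟩ := hadm
  have hstep : ∀ a, x (k+1) a = A k *ᵥ x k a + At k *ᵥ (∫ b, x k b ∂μ) + B k *ᵥ ν k a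
      + Bt k *ᵥ (∫ b, ν k b ∂μ) + W k a • (C k *ᵥ x k a + Ct k *ᵥ (∫ b, x k b ∂μ)
      + D k *ᵥ ν k a + Dt k *ᵥ (∫ b, ν k b ∂μ)) := by
    intro a
    rw [hx]
    rfl
  have hx2 : MemLp (x k) 2 μ := by
    rw [hx] at hindep ⊢
    exact mfState_memL2 K A At C Ct B Bt D Dt W hW2 x0 ν hν2 hindep k hk
  have hωv : ∫ a, W k a * W k a ∂μ = 1 := by simpa using hWcov k hk k hk
  exact one_step_abstract (A k) (At k) (C k) (Ct k) (B k) (Bt k) (D k) (Dt k)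
    (W k) (x k) (ν k) (x (k+1)) hx2 (hν2 k hk) (hW2 k hk) (hindep k hk)
    (hWmean k hk) hωv _ _ rfl rfl hstep Pk Pk1 hPk1
end

section
/- (Completing the square, centered part) Let γ > 0 and suppose P₁(0),…,P₁(K+1) are symmetric n×n matrices satisfying P₁(k) = L(P₁(k+1),k) − G(P₁(k+1),k)·H(P₁(k+1),k)⁻¹·G(P₁(k+1),k)ᵀ with H(P₁(k+1),k) > 0 for all k. Then for any admissible disturbance ν with associated state x: Σ_{k=0}^{K} E{ [x(k)−E x(k); ν(k)−E ν(k)]ᵀ M̃(P₁,k) [x(k)−E x(k); ν(k)−E ν(k)] } = Σ_{k=0}^{K} E{ [(ν(k)−E ν(k)) − (ν*(k)−E ν*(k))]ᵀ H(P₁(k+1),k) [(ν(k)−E ν(k)) − (ν*(k)−E ν*(k))] }, where ν*(k)−E ν*(k) := −H(P₁(k+1),k)⁻¹G(P₁(k+1),k)ᵀ(x(k)−E x(k)), and M̃(P₁,k) is the 2×2 block matrix with blocks M̃₁₁ = −P₁(k)+A(k)ᵀP₁(k+1)A(k)+C(k)ᵀP₁(k+1)C(k)−Φ(k)ᵀΦ(k),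 M̃₁₂ = A(k)ᵀP₁(k+1)B(k)+C(k)ᵀP₁(k+1)D(k), M̃₂₁ = M̃₁₂ᵀ, M̃₂₂ = γ²I_l+B(k)ᵀP₁(k+1)B(k)+D(k)ᵀP₁(k+1)D(k). -/
open MeasureTheory ProbabilityTheory Matrix Finset

/-- `L`-type Riccati operator: `AᵀQA + CᵀPC − ΦᵀΦ` (with `Q = P` this is `L(P)`,
with `A = 𝔸`, `C = ℂ` it is `L̃(P,Q)`). -/
noncomputable def mfL {n m : ℕ} (A C : Matrix (Fin n) (Fin n) ℝ)
    (Φ : Matrix (Fin m) (Fin n) ℝ) (Q P : Matrix (Fin n) (Fin n) ℝ) :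
    Matrix (Fin n) (Fin n) ℝ :=
  Aᵀ * Q * A + Cᵀ * P * C - Φᵀ * Φ

/-- `G`-type Riccati operator: `AᵀQB + CᵀPD`. -/
noncomputable def mfG {n l : ℕ} (A C : Matrix (Fin n) (Fin n) ℝ)
    (B D : Matrix (Fin n) (Fin l) ℝ) (Q P : Matrix (Fin n) (Fin n) ℝ) :
    Matrix (Fin n) (Fin l) ℝ :=
  Aᵀ * Q * B + Cᵀ * P * D

/-- `H`-type operator: `γ²I + BᵀQB + DᵀPD`. -/
noncomputable def mfH {n l : ℕ} (γ : ℝ) (B D : Matrix (Fin n) (Fin l) ℝ)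
    (Q P : Matrix (Fin n) (Fin n) ℝ) : Matrix (Fin l) (Fin l) ℝ :=
  γ^2 • (1 : Matrix (Fin l) (Fin l) ℝ) + Bᵀ * Q * B + Dᵀ * P * D


private lemma mf_key {n l : ℕ} (G : Matrix (Fin n) (Fin l) ℝ) (H : Matrix (Fin l) (Fin l) ℝ)
    (hH : H.IsSymm) (hdet : IsUnit H.det) (y : Fin n → ℝ) (u : Fin l → ℝ) :
    Sum.elim y u ⬝ᵥ (Matrix.fromBlocks (G * H⁻¹ * Gᵀ) G Gᵀ H) *ᵥ Sum.elim y u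
      = (u + (H⁻¹ * Gᵀ) *ᵥ y) ⬝ᵥ H *ᵥ (u + (H⁻¹ * Gᵀ) *ᵥ y) := by
  have h1 : H * H⁻¹ = 1 := Matrix.mul_nonsing_inv H hdet
  have h1' : H⁻¹ * H = 1 := Matrix.nonsing_inv_mul H hdet
  have h2 : H⁻¹ᵀ = H⁻¹ := by rw [Matrix.transpose_nonsing_inv, hH.eq]
  have hEy : H *ᵥ ((H⁻¹ * Gᵀ) *ᵥ y) = Gᵀ *ᵥ y := by
    rw [Matrix.mulVec_mulVec, ← Matrix.mul_assoc, h1, Matrix.one_mul]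
  have hdotE : ∀ v : Fin l → ℝ, ((H⁻¹ * Gᵀ) *ᵥ y) ⬝ᵥ v = y ⬝ᵥ (G * H⁻¹) *ᵥ v := by
    intro v
    rw [Matrix.dotProduct_mulVec, ← Matrix.vecMul_transpose, Matrix.transpose_mul, h2,
      Matrix.transpose_transpose]
  rw [Matrix.fromBlocks_mulVec]
  simp only [Sum.elim_comp_inl, Sum.elim_comp_inr]
  rw [sumElim_dotProduct_sumElim, Matrix.mulVec_add, hEy,
    dotProduct_add, dotProduct_add, add_dotProduct, hdotE,
    Matrix.mulVec_add, dotProduct_add, Matrix.mulVec_mulVec, Matrix.mulVec_mulVec,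
    Matrix.mul_assoc G H⁻¹ H, h1', Matrix.mul_one]
  rw [dotProduct_add]; ring

/-- completing the square, centered part. -/
theorem mf_complete_square_centered {Ω : Type*} [MeasurableSpace Ω]
    (μ : Measure Ω) [IsProbabilityMeasure μ]
    (K n l m : ℕ) (γ : ℝ) (hγ : 0 < γ)
    (A At C Ct : ℕ → Matrix (Fin n) (Fin n) ℝ)
    (B Bt D Dt : ℕ → Matrix (Fin n) (Fin l) ℝ)
    (Φ : ℕ → Matrix (Fin m) (Fin n) ℝ)
    (W : ℕ → Ω → ℝ)
    (hW2 : ∀ k ≤ K, MemLp (W k) 2 μ)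
    (hWmean : ∀ k ≤ K, ∫ a, W k a ∂μ = 0)
    (hWcov : ∀ s ≤ K, ∀ t ≤ K, ∫ a, W s a * W t a ∂μ = if s = t then (1:ℝ) else 0)
    (P1 : ℕ → Matrix (Fin n) (Fin n) ℝ)
    (hsymm : ∀ k ≤ K + 1, (P1 k).IsSymm)
    (hP1eq : ∀ k ≤ K,
      P1 k = mfL (A k) (C k) (Φ k) (P1 (k+1)) (P1 (k+1))
        - mfG (A k) (C k) (B k) (D k) (P1 (k+1)) (P1 (k+1))
          * (mfH γ (B k) (D k) (P1 (k+1)) (P1 (k+1)))⁻¹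
          * (mfG (A k) (C k) (B k) (D k) (P1 (k+1)) (P1 (k+1)))ᵀ)
    (hposH : ∀ k ≤ K, (mfH γ (B k) (D k) (P1 (k+1)) (P1 (k+1))).PosDef)
    (x0 : Fin n → ℝ) (ν : ℕ → Ω → Fin l → ℝ)
    (x : ℕ → Ω → Fin n → ℝ)
    (hx : x = mfState μ A At C Ct B Bt D Dt W x0 ν)
    (hadm : mfAdmissible μ K W x ν) :
    (∑ k ∈ Finset.range (K + 1), ∫ a,
        (Sum.elim (x k a - ∫ b, x k b ∂μ) (ν k a - ∫ b, ν k b ∂μ)) ⬝ᵥ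
          (Matrix.fromBlocks
            (-(P1 k) + (A k)ᵀ * P1 (k+1) * A k + (C k)ᵀ * P1 (k+1) * C k - (Φ k)ᵀ * Φ k)
            ((A k)ᵀ * P1 (k+1) * B k + (C k)ᵀ * P1 (k+1) * D k)
            (((A k)ᵀ * P1 (k+1) * B k + (C k)ᵀ * P1 (k+1) * D k)ᵀ)
            (γ^2 • (1 : Matrix (Fin l) (Fin l) ℝ)
              + (B k)ᵀ * P1 (k+1) * B k + (D k)ᵀ * P1 (k+1) * D k)) *ᵥ
          (Sum.elim (x k a - ∫ b, x k b ∂μ) (ν k a - ∫ b, ν k b ∂μ)) ∂μ)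
    = ∑ k ∈ Finset.range (K + 1), ∫ a,
        ((ν k a - ∫ b, ν k b ∂μ)
          + ((mfH γ (B k) (D k) (P1 (k+1)) (P1 (k+1)))⁻¹
              * (mfG (A k) (C k) (B k) (D k) (P1 (k+1)) (P1 (k+1)))ᵀ) *ᵥ
            (x k a - ∫ b, x k b ∂μ)) ⬝ᵥ
        (mfH γ (B k) (D k) (P1 (k+1)) (P1 (k+1))) *ᵥ
        ((ν k a - ∫ b, ν k b ∂μ)
          + ((mfH γ (B k) (D k) (P1 (k+1)) (P1 (k+1)))⁻¹
              * (mfG (A k) (C k) (B k) (D k) (P1 (k+1)) (P1 (k+1)))ᵀ) *ᵥ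
            (x k a - ∫ b, x k b ∂μ)) ∂μ := by
  refine Finset.sum_congr rfl fun k hk => ?_
  have hk' : k ≤ K := Nat.lt_succ_iff.mp (Finset.mem_range.mp hk)
  have hP : (P1 (k+1))ᵀ = P1 (k+1) := hsymm (k+1) (by omega)
  have hHs : (mfH γ (B k) (D k) (P1 (k+1)) (P1 (k+1))).IsSymm := by
    simp [Matrix.IsSymm, mfH, Matrix.transpose_add, Matrix.transpose_mul, hP,
      Matrix.mul_assoc]
  have hdet : IsUnit (mfH γ (B k) (D k) (P1 (k+1)) (P1 (k+1))).det :=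
    isUnit_iff_ne_zero.mpr (hposH k hk').det_pos.ne'
  have hM11 : -(P1 k) + (A k)ᵀ * P1 (k+1) * A k + (C k)ᵀ * P1 (k+1) * C k - (Φ k)ᵀ * Φ k
      = mfG (A k) (C k) (B k) (D k) (P1 (k+1)) (P1 (k+1))
        * (mfH γ (B k) (D k) (P1 (k+1)) (P1 (k+1)))⁻¹
        * (mfG (A k) (C k) (B k) (D k) (P1 (k+1)) (P1 (k+1)))ᵀ := by
    rw [hP1eq k hk']
    simp only [mfL]
    abel
  refine integral_congr_ae (Filter.Eventually.of_forall fun a => ?_)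
  rw [hM11]
  exact mf_key _ _ hHs hdet _ _
end
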